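/- Let $I=(t^{v_1},\dots,t^{v_q})$ be an ideal of $S=K[t_1,\dots,t_s]$ generated by monomials of degree $2$, and let $\mathcal{B} = \{e_{s+1}\}\cup\{e_i+e_{s+1}\}_{i=1}^s\cup\{(v_i,1)\}_{i=1}^q \subset \mathbb{Z}^{s+1}$. Then $I$ is a normal ideal if and only if $\mathcal{B}$ is a Hilbert basis, i.e., $\mathbb{R}_+\mathcal{B}\cap\mathbb{Z}^{s+1}=\mathbb{N}\mathcal{B}$. -/

import Mathlib

open MvPolynomial

/-- The monomial `t^a` in `K[t_1,…,t_s]`. -/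
noncomputable def mono (K : Type*) [Field K] {s : ℕ} (a : Fin s → ℕ) :
    MvPolynomial (Fin s) K :=
  MvPolynomial.monomial (Finsupp.equivFunOnFinite.symm a) 1

/-- The monomial ideal generated by the monomials `t^{v i}`. -/
noncomputable def monIdeal (K : Type*) [Field K] {s q : ℕ} (v : Fin q → Fin s → ℕ) :
    Ideal (MvPolynomial (Fin s) K) :=
  Ideal.span (Set.range fun i => mono K (v i))

/-- The integral closure of a monomial ideal `J`: the ideal generated by the
monomials `t^a` such that `(t^a)^p ∈ J^p` for some `p ≥ 1`. -/
noncomputable def intCl {K : Type*} [Field K] {s : ℕ}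
    (J : Ideal (MvPolynomial (Fin s) K)) : Ideal (MvPolynomial (Fin s) K) :=
  Ideal.span {m | (∃ a : Fin s → ℕ, m = mono K a) ∧ ∃ p : ℕ, 1 ≤ p ∧ m ^ p ∈ J ^ p}

/-- A monomial ideal is normal if `I^n` is integrally closed for all `n ≥ 1`. -/
def IsNormalIdeal {K : Type*} [Field K] {s : ℕ}
    (I : Ideal (MvPolynomial (Fin s) K)) : Prop :=
  ∀ n : ℕ, 1 ≤ n → intCl (I ^ n) = I ^ n

/-- The vectors of the set
`ℬ = {e_{s+1}} ∪ {e_i + e_{s+1}}_{i=1}^s ∪ {(v_i,1)}_{i=1}^q` in `ℤ^{s+1}`. -/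
def bGens {s q : ℕ} (v : Fin q → Fin s → ℕ) : (Unit ⊕ Fin s ⊕ Fin q) → Fin (s + 1) → ℤ :=
  Sum.elim
    (fun _ k => if (k : ℕ) = s then 1 else 0)
    (Sum.elim
      (fun i k => (if (k : ℕ) = (i : ℕ) then 1 else 0) + (if (k : ℕ) = s then 1 else 0))
      (fun j k => if h : (k : ℕ) < s then (v j ⟨k, h⟩ : ℤ) else 1))

/-- `t^b ∈ I^c` combinatorially. -/
def Pv {s q : ℕ} (v : Fin q → Fin s → ℕ) (b : Fin s → ℕ) (c : ℕ) : Prop :=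
  ∃ m : Fin q → ℕ, (∑ j, m j) = c ∧ ∀ k, (∑ j, m j * v j k) ≤ b k

section IdealSide
variable {K : Type*} [Field K] {s q : ℕ} (v : Fin q → Fin s → ℕ)

lemma eqf_symm_sum (m : Fin q → ℕ) (w : Fin q → Fin s → ℕ) :
    Finsupp.equivFunOnFinite.symm (fun k => ∑ j, m j * w j k)
      = ∑ j, m j • Finsupp.equivFunOnFinite.symm (w j) := by
  ext k
  simp [Finset.sum_apply']

lemma mono_pow (a : Fin s → ℕ) (p : ℕ) :
    mono K a ^ p = mono K (fun k => p * a k) := by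
  have h : p • Finsupp.equivFunOnFinite.symm a
      = Finsupp.equivFunOnFinite.symm (fun k => p * a k) := by
    ext k; simp [mul_comm]
  rw [mono, mono, monomial_pow, one_pow, h]

def EvF {s q : ℕ} (v : Fin q → Fin s → ℕ) (c : ℕ) : Set (Fin s →₀ ℕ) :=
  {d | ∃ m : Fin q → ℕ, (∑ j, m j) = c ∧ d = ∑ j, m j • Finsupp.equivFunOnFinite.symm (v j)}

lemma monIdeal_pow_eq (c : ℕ) :
    (monIdeal K v) ^ c = Ideal.span ((fun d => monomial d (1 : K)) '' EvF v c) := by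
  induction c with
  | zero =>
      rw [pow_zero]
      have h0 : EvF v 0 = {0} := by
        ext d
        constructor
        · rintro ⟨m, hm, rfl⟩
          have : ∀ j ∈ Finset.univ, m j = 0 := by
            intro j _
            exact (Finset.sum_eq_zero_iff.mp hm) j (Finset.mem_univ j)
          simp only [Set.mem_singleton_iff]
          rw [Finset.sum_congr rfl (fun j hj => by rw [this j hj, zero_smul])]
          simp
        · rintro rfl
          exact ⟨0, by simp, by simp⟩
      rw [h0]
      simp [Ideal.one_eq_top, Ideal.span_singleton_one]
  | succ c ih =>
      rw [pow_succ, ih, monIdeal]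
      have hr : (Set.range fun i => mono K (v i))
          = (fun d => monomial d (1 : K)) '' (Set.range fun j => Finsupp.equivFunOnFinite.symm (v j)) := by
        rw [← Set.range_comp]
        rfl
      rw [hr, Ideal.span_mul_span]
      apply le_antisymm
      · rw [Ideal.span_le]
        intro x hx
        simp only [Set.mem_mul] at hx
        obtain ⟨f, ⟨d, ⟨m, hm, rfl⟩, rfl⟩, g, ⟨e, ⟨j, rfl⟩, rfl⟩, rfl⟩ := hx
        apply Ideal.subset_span
        refine ⟨∑ j' : Fin q, (m j' + (if j' = j then 1 else 0)) • Finsupp.equivFunOnFinite.symm (v j'),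
          ⟨fun j' => m j' + (if j' = j then 1 else 0), ?_, rfl⟩, ?_⟩
        · simp [Finset.sum_add_distrib, hm, add_comm]
        · rw [monomial_mul, one_mul]
          congr 1
          rw [Finset.sum_congr rfl (fun j' _ => add_smul (m j') _ _)]
          rw [Finset.sum_add_distrib]
          congr 1
          simp [ite_smul]
      · rw [Ideal.span_le]
        rintro x ⟨d, ⟨m, hm, rfl⟩, rfl⟩
        have hj : ∃ j, m j ≠ 0 := by
          by_contra h
          push_neg at h
          simp [h] at hm
        obtain ⟨j, hj⟩ := hj
        set w : Fin q → (Fin s →₀ ℕ) := fun j' => Finsupp.equivFunOnFinite.symm (v j') with hw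
        set m' := Function.update m j (m j - 1) with hm'def
        have hmm : ∀ j', m j' = m' j' + (if j' = j then 1 else 0) := by
          intro j'
          by_cases h : j' = j
          · subst h; simp [hm'def, Function.update_self]; omega
          · simp [hm'def, Function.update_of_ne h, h]
        have hsum : (∑ j', m' j') = c := by
          have h1 : (∑ j', m j') = (∑ j', m' j') + (∑ j' : Fin q, if j' = j then 1 else 0) := by
            rw [← Finset.sum_add_distrib]
            exact Finset.sum_congr rfl fun j' _ => hmm j'
          simp only [Finset.sum_ite_eq', Finset.mem_univ, if_true] at h1
          omega
        have hd : (∑ j', m j' • w j') = (∑ j', m' j' • w j') + w j := by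
          have h1 : ∀ j' ∈ Finset.univ, m j' • w j' = m' j' • w j' + (if j' = j then 1 else 0) • w j' := by
            intro j' _
            rw [← add_smul, ← hmm j']
          rw [Finset.sum_congr rfl h1, Finset.sum_add_distrib]
          congr 1
          simp [ite_smul]
        have hxeq : (monomial (∑ j', m j' • w j') (1:K))
            = monomial (∑ j', m' j' • w j') (1:K) * monomial (w j) (1:K) := by
          rw [monomial_mul, one_mul, hd]
        show (monomial (∑ j', m j' • w j') (1:K)) ∈ _
        rw [hxeq]
        apply Ideal.subset_span
        simp only [Set.mem_mul]
        refine ⟨monomial (∑ j', m' j' • w j') (1:K), ?_, monomial (w j) (1:K), ?_, rfl⟩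
        · exact ⟨_, ⟨m', hsum, rfl⟩, rfl⟩
        · exact ⟨w j, ⟨j, rfl⟩, rfl⟩

lemma mono_mem_pow_iff (b : Fin s → ℕ) (c : ℕ) :
    mono K b ∈ (monIdeal K v) ^ c ↔ Pv v b c := by
  classical
  rw [monIdeal_pow_eq, mem_ideal_span_monomial_image]
  have hsupp : (mono K b).support = {Finsupp.equivFunOnFinite.symm b} := by
    rw [mono, support_monomial, if_neg one_ne_zero]
  rw [hsupp]
  simp only [Finset.mem_singleton, forall_eq]
  constructor
  · rintro ⟨d, ⟨m, hm, rfl⟩, hle⟩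
    refine ⟨m, hm, fun k => ?_⟩
    have := hle k
    simpa [Finset.sum_apply'] using this
  · rintro ⟨m, hm, hle⟩
    refine ⟨∑ j, m j • Finsupp.equivFunOnFinite.symm (v j), ⟨m, hm, rfl⟩, fun k => ?_⟩
    simpa [Finset.sum_apply'] using hle k

/-- The arithmetic statement equivalent to normality. -/
def Astmt {s q : ℕ} (v : Fin q → Fin s → ℕ) : Prop :=
  ∀ (a : Fin s → ℕ) (n p : ℕ), 1 ≤ n → 1 ≤ p →
    Pv v (fun k => p * a k) (p * n) → Pv v a n

lemma normal_iff_A : IsNormalIdeal (monIdeal K v) ↔ Astmt v := by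
  constructor
  · intro h a n p hn hp hP
    rw [← mono_mem_pow_iff (K := K) v a n, ← h n hn]
    apply Ideal.subset_span
    refine ⟨⟨a, rfl⟩, p, hp, ?_⟩
    rw [mono_pow, ← pow_mul, mul_comm n p]
    exact (mono_mem_pow_iff v _ _).mpr hP
  · intro hA n hn
    apply le_antisymm
    · rw [intCl, Ideal.span_le]
      rintro x ⟨⟨a, rfl⟩, p, hp, hpow⟩
      rw [mono_pow, ← pow_mul, mul_comm n p, mono_mem_pow_iff v] at hpow
      exact (mono_mem_pow_iff v a n).mpr (hA a n p hn hp hpow)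
    · conv_lhs => rw [monIdeal_pow_eq]
      rw [Ideal.span_le]
      rintro x ⟨d, ⟨m, hm, rfl⟩, rfl⟩
      apply Ideal.subset_span
      constructor
      · refine ⟨fun k => ∑ j, m j * v j k, ?_⟩
        rw [mono, eqf_symm_sum]
      · refine ⟨1, le_refl 1, ?_⟩
        rw [pow_one, pow_one, monIdeal_pow_eq]
        exact Ideal.subset_span ⟨_, ⟨m, hm, rfl⟩, rfl⟩

end IdealSide


section FM

variable {F : Type*} [Field F] [LinearOrder F] [IsStrictOrderedRing F]

/-- Evaluation of a rational linear form on a point of `F^n`. -/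
def FEval {n : ℕ} (f : Fin n → ℚ) (x : Fin n → F) : F := ∑ k, (f k : F) * x k

/-- Feasibility of a finite system of rational linear inequalities over `F`. -/
def Feas (F : Type*) [Field F] [LinearOrder F] [IsStrictOrderedRing F] {n : ℕ} (S : List ((Fin n → ℚ) × ℚ)) : Prop :=
  ∃ x : Fin n → F, ∀ p ∈ S, FEval p.1 x ≤ (p.2 : F)

/-- Fourier–Motzkin elimination of the last variable. -/
def elimLast {n : ℕ} (S : List ((Fin (n+1) → ℚ) × ℚ)) : List ((Fin n → ℚ) × ℚ) :=
  ((S.filter (fun p => p.1 (Fin.last n) = 0)).map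
    (fun p => (fun k => p.1 k.castSucc, p.2)))
  ++ ((S.filter (fun p => 0 < p.1 (Fin.last n))).flatMap (fun p =>
      (S.filter (fun p' => p'.1 (Fin.last n) < 0)).map (fun p' =>
        (fun k => (-p'.1 (Fin.last n)) * p.1 k.castSucc + p.1 (Fin.last n) * p'.1 k.castSucc,
         (-p'.1 (Fin.last n)) * p.2 + p.1 (Fin.last n) * p'.2))))

lemma FEval_succ {n : ℕ} (f : Fin (n+1) → ℚ) (x : Fin (n+1) → F) :
    FEval f x = FEval (fun k => f k.castSucc) (fun k => x k.castSucc)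
      + (f (Fin.last n) : F) * x (Fin.last n) := by
  rw [FEval, Fin.sum_univ_castSucc]; rfl

lemma FEval_lin {n : ℕ} (α β : ℚ) (f g : Fin n → ℚ) (x : Fin n → F) :
    FEval (fun k => α * f k + β * g k) x = (α : F) * FEval f x + (β : F) * FEval g x := by
  simp only [FEval, Finset.mul_sum, ← Finset.sum_add_distrib]
  congr 1; ext k; push_cast; ring

lemma le_foldr_max (L : List F) (z l : F) (h : l ∈ L) : l ≤ L.foldr max z := by
  induction L with
  | nil => simp at h
  | cons a L ih =>
      rcases List.mem_cons.mp h with rfl | h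
      · exact le_max_left _ _
      · exact le_trans (ih h) (le_max_right _ _)

lemma foldr_min_le (U : List F) (z u : F) (h : u ∈ U ∨ u = z) : U.foldr min z ≤ u := by
  induction U with
  | nil =>
      rcases h with h | rfl
      · simp at h
      · exact le_refl _
  | cons a U ih =>
      rcases h with h | rfl
      · rcases List.mem_cons.mp h with rfl | h
        · exact min_le_left _ _
        · exact le_trans (min_le_right _ _) (ih (Or.inl h))
      · exact le_trans (min_le_right _ _) (ih (Or.inr rfl))

lemma foldr_min_mem (U : List F) (z : F) : U.foldr min z ∈ U ∨ U.foldr min z = z := by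
  induction U with
  | nil => exact Or.inr rfl
  | cons a U ih =>
      rcases min_choice a (U.foldr min z) with h | h
      · exact Or.inl (by rw [List.foldr_cons, h]; exact List.mem_cons_self)
      · rw [List.foldr_cons, h]
        rcases ih with h' | h'
        · exact Or.inl (List.mem_cons_of_mem _ h')
        · exact Or.inr h'

lemma exists_between_lists (L U : List F) (h : ∀ l ∈ L, ∀ u ∈ U, l ≤ u) :
    ∃ t : F, (∀ l ∈ L, l ≤ t) ∧ (∀ u ∈ U, t ≤ u) := by
  cases U with
  | nil => exact ⟨L.foldr max 0, fun l hl => le_foldr_max L 0 l hl, by simp⟩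
  | cons u U' =>
      refine ⟨(u :: U').foldr min u, fun l hl => ?_, fun u' hu' => ?_⟩
      · rcases foldr_min_mem (u :: U') u with hm | hm
        · exact h l hl _ hm
        · rw [hm]; exact h l hl u (List.mem_cons_self)
      · exact foldr_min_le _ _ _ (Or.inl hu')

lemma feas_elimLast_of_feas {n : ℕ} (S : List ((Fin (n+1) → ℚ) × ℚ)) (h : Feas F S) :
    Feas F (elimLast S) := by
  obtain ⟨x, hx⟩ := h
  refine ⟨fun k => x k.castSucc, fun p hp => ?_⟩
  rcases List.mem_append.mp hp with hp | hp
  · obtain ⟨r, hr, rfl⟩ := List.mem_map.mp hp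
    have h0 : r.1 (Fin.last n) = 0 := by
      have := List.of_mem_filter hr
      simpa using this
    have := hx r (List.mem_of_mem_filter hr)
    rw [FEval_succ] at this
    rw [h0] at this
    simpa using this
  · obtain ⟨r, hr, hmem⟩ := List.mem_flatMap.mp hp
    obtain ⟨r', hr', rfl⟩ := List.mem_map.mp hmem
    have hpos : 0 < r.1 (Fin.last n) := by simpa using List.of_mem_filter hr
    have hneg : r'.1 (Fin.last n) < 0 := by simpa using List.of_mem_filter hr'
    have h1 := hx r (List.mem_of_mem_filter hr)
    have h2 := hx r' (List.mem_of_mem_filter hr')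
    rw [FEval_succ] at h1 h2
    rw [FEval_lin]
    have ha : (0 : F) ≤ ((-r'.1 (Fin.last n) : ℚ) : F) := by
      exact_mod_cast le_of_lt (neg_pos.mpr hneg)
    have hb : (0 : F) ≤ ((r.1 (Fin.last n) : ℚ) : F) := by
      exact_mod_cast hpos.le
    have h1' := mul_le_mul_of_nonneg_left h1 ha
    have h2' := mul_le_mul_of_nonneg_left h2 hb
    push_cast at h1' h2' ⊢
    nlinarith [h1', h2']

lemma feas_of_feas_elimLast {n : ℕ} (S : List ((Fin (n+1) → ℚ) × ℚ))
    (h : Feas F (elimLast S)) : Feas F S := by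
  classical
  obtain ⟨y, hy⟩ := h
  set U : List F := (S.filter (fun p => 0 < p.1 (Fin.last n))).map
    (fun p => (((p.2 : F) - FEval (fun k => p.1 k.castSucc) y) / (p.1 (Fin.last n) : F))) with hU
  set L : List F := (S.filter (fun p => p.1 (Fin.last n) < 0)).map
    (fun p => (((p.2 : F) - FEval (fun k => p.1 k.castSucc) y) / (p.1 (Fin.last n) : F))) with hL
  have hLU : ∀ l ∈ L, ∀ u ∈ U, l ≤ u := by
    intro l hl u hu
    rw [hL] at hl; rw [hU] at hu
    obtain ⟨r', hr', rfl⟩ := List.mem_map.mp hl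
    obtain ⟨r, hr, rfl⟩ := List.mem_map.mp hu
    have hneg : r'.1 (Fin.last n) < 0 := by simpa using List.of_mem_filter hr'
    have hpos : 0 < r.1 (Fin.last n) := by simpa using List.of_mem_filter hr
    -- the combined inequality is in elimLast S
    have hcomb : ((fun k => (-r'.1 (Fin.last n)) * r.1 k.castSucc
          + r.1 (Fin.last n) * r'.1 k.castSucc),
          (-r'.1 (Fin.last n)) * r.2 + r.1 (Fin.last n) * r'.2) ∈ elimLast S := by
      apply List.mem_append.mpr
      right
      apply List.mem_flatMap.mpr
      exact ⟨r, hr, List.mem_map.mpr ⟨r', hr', rfl⟩⟩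
    have hkey := hy _ hcomb
    rw [FEval_lin] at hkey
    have hnegF : ((r'.1 (Fin.last n) : ℚ) : F) < 0 := by exact_mod_cast hneg
    have hposF : (0 : F) < ((r.1 (Fin.last n) : ℚ) : F) := by exact_mod_cast hpos
    rw [div_le_iff_of_neg hnegF, div_mul_eq_mul_div, div_le_iff₀ hposF]
    push_cast at hkey ⊢
    nlinarith [hkey]
  obtain ⟨t, htL, htU⟩ := exists_between_lists L U hLU
  refine ⟨(Fin.snoc y t : Fin (n+1) → F), fun p hp => ?_⟩
  rw [FEval_succ]
  have hfront : (fun k : Fin n => (Fin.snoc y t : Fin (n+1) → F) k.castSucc) = y := by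
    funext k; simp [Fin.snoc_castSucc]
  have hlast : (Fin.snoc y t : Fin (n+1) → F) (Fin.last n) = t := by simp [Fin.snoc_last]
  rw [hfront, hlast]
  rcases lt_trichotomy (p.1 (Fin.last n)) 0 with hc | hc | hc
  · have hl : ((p.2 : F) - FEval (fun k => p.1 k.castSucc) y) / (p.1 (Fin.last n) : F) ≤ t := by
      apply htL
      rw [hL]
      exact List.mem_map.mpr ⟨p, List.mem_filter.mpr ⟨hp, by simpa using hc⟩, rfl⟩
    have hcF : ((p.1 (Fin.last n) : ℚ) : F) < 0 := by exact_mod_cast hc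
    rw [div_le_iff_of_neg hcF] at hl
    linarith
  · rw [hc]; push_cast
    have h0 : (fun k => p.1 k.castSucc, p.2) ∈ elimLast S := by
      apply List.mem_append.mpr
      left
      exact List.mem_map.mpr ⟨p, List.mem_filter.mpr ⟨hp, by simpa using hc⟩, rfl⟩
    have := hy _ h0
    simpa using this
  · have hu : t ≤ ((p.2 : F) - FEval (fun k => p.1 k.castSucc) y) / (p.1 (Fin.last n) : F) := by
      apply htU
      rw [hU]
      exact List.mem_map.mpr ⟨p, List.mem_filter.mpr ⟨hp, by simpa using hc⟩, rfl⟩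
    have hcF : (0 : F) < ((p.1 (Fin.last n) : ℚ) : F) := by exact_mod_cast hc
    rw [le_div_iff₀ hcF] at hu
    linarith

theorem feas_rat_of_feas_real : ∀ {n : ℕ} (S : List ((Fin n → ℚ) × ℚ)),
    Feas ℝ S → Feas ℚ S := by
  intro n
  induction n with
  | zero =>
      intro S hS
      obtain ⟨x, hx⟩ := hS
      refine ⟨fun k => 0, fun p hp => ?_⟩
      have := hx p hp
      rw [FEval] at this ⊢
      simp only [Finset.univ_eq_empty, Finset.sum_empty] at this ⊢
      exact_mod_cast this
  | succ n ih =>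
      intro S hS
      exact feas_of_feas_elimLast S (ih (elimLast S) (feas_elimLast_of_feas S hS))

end FM

section Cone
variable {s q : ℕ} (v : Fin q → Fin s → ℕ)

lemma sum_sum_unit {M : Type*} [AddCommMonoid M] (f : (Unit ⊕ Fin s ⊕ Fin q) → M) :
    ∑ j, f j = f (Sum.inl ())
      + ((∑ i, f (Sum.inr (Sum.inl i))) + ∑ j, f (Sum.inr (Sum.inr j))) := by
  rw [Fintype.sum_sum_type, Fintype.sum_sum_type, Fintype.sum_unique]

lemma bg1c (u : Unit) (i : Fin s) : bGens v (Sum.inl u) i.castSucc = 0 := by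
  have h : ((i.castSucc : Fin (s+1)) : ℕ) ≠ s := by
    rw [Fin.coe_castSucc]; exact Nat.ne_of_lt i.isLt
  simp only [bGens, Sum.elim_inl, if_neg h]

lemma bg1l (u : Unit) : bGens v (Sum.inl u) (Fin.last s) = 1 := by
  simp [bGens]

lemma bg2c (i' i : Fin s) :
    bGens v (Sum.inr (Sum.inl i')) i.castSucc = if i' = i then 1 else 0 := by
  have h : ((i.castSucc : Fin (s+1)) : ℕ) ≠ s := by
    rw [Fin.coe_castSucc]; exact Nat.ne_of_lt i.isLt
  have h2 : (((i.castSucc : Fin (s+1)) : ℕ) = (i' : ℕ)) ↔ i' = i := by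
    rw [Fin.coe_castSucc]
    constructor
    · intro hh; exact Fin.ext hh.symm
    · intro hh; rw [hh]
  simp only [bGens, Sum.elim_inr, Sum.elim_inl, if_neg h, add_zero]
  rw [if_congr h2 rfl rfl]

lemma bg2l (i' : Fin s) : bGens v (Sum.inr (Sum.inl i')) (Fin.last s) = 1 := by
  have h : s ≠ (i' : ℕ) := (Nat.ne_of_lt i'.isLt).symm
  simp [bGens, h]

lemma bg3c (j : Fin q) (i : Fin s) :
    bGens v (Sum.inr (Sum.inr j)) i.castSucc = (v j i : ℤ) := by
  have h : ((i.castSucc : Fin (s+1)) : ℕ) < s := by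
    rw [Fin.coe_castSucc]; exact i.isLt
  simp only [bGens, Sum.elim_inr, dif_pos h]
  have h2 : (⟨((i.castSucc : Fin (s+1)) : ℕ), h⟩ : Fin s) = i := Fin.ext (by rw [Fin.coe_castSucc])
  rw [h2]

lemma bg3l (j : Fin q) : bGens v (Sum.inr (Sum.inr j)) (Fin.last s) = 1 := by
  simp [bGens]

lemma sum_v_two (hdeg : ∀ i, (∑ k, v i k) = 2) (j : Fin q) :
    (∑ i, (v j i : ℝ)) = 2 := by exact_mod_cast hdeg j

lemma double_sum_swap (d : Fin q → ℝ) (hdeg : ∀ i, (∑ k, v i k) = 2) :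
    (∑ i, ∑ j, d j * (v j i : ℝ)) = 2 * ∑ j, d j := by
  rw [Finset.sum_comm]
  have : ∀ j : Fin q, (∑ i, d j * (v j i : ℝ)) = 2 * d j := by
    intro j
    rw [← Finset.mul_sum, sum_v_two v hdeg j]
    ring
  rw [Finset.sum_congr rfl (fun j _ => this j), ← Finset.mul_sum]

/-- Characterization of membership in the real cone. -/
lemma realRep_iff (hdeg : ∀ i, (∑ k, v i k) = 2) (x : Fin (s + 1) → ℤ) :
    (∃ c : (Unit ⊕ Fin s ⊕ Fin q) → ℝ, (∀ j, 0 ≤ c j) ∧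
        ∀ k, (x k : ℝ) = ∑ j, c j * (bGens v j k : ℝ)) ↔
    ((∀ i : Fin s, 0 ≤ x (Fin.castSucc i)) ∧ ∃ d : Fin q → ℝ, (∀ j, 0 ≤ d j) ∧
      (∀ i : Fin s, (∑ j, d j * (v j i : ℝ)) ≤ ((x (Fin.castSucc i) : ℤ) : ℝ)) ∧
      ((∑ i, ((x (Fin.castSucc i) : ℤ) : ℝ)) - (∑ j, d j) ≤ ((x (Fin.last s) : ℤ) : ℝ))) := by
  constructor
  · rintro ⟨c, hc0, hc⟩
    have hci : ∀ i : Fin s, ((x (Fin.castSucc i) : ℤ) : ℝ)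
        = c (Sum.inr (Sum.inl i)) + ∑ j, c (Sum.inr (Sum.inr j)) * (v j i : ℝ) := by
      intro i
      rw [hc (Fin.castSucc i), sum_sum_unit]
      simp [bg1c, bg2c, bg3c, mul_ite, Finset.sum_ite_eq']
    have hcl : ((x (Fin.last s) : ℤ) : ℝ) = c (Sum.inl ())
        + ((∑ i, c (Sum.inr (Sum.inl i))) + ∑ j, c (Sum.inr (Sum.inr j))) := by
      rw [hc (Fin.last s), sum_sum_unit]
      simp [bg1l, bg2l, bg3l]
    have hsum2 : (∑ i, ((x (Fin.castSucc i) : ℤ) : ℝ))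
        = (∑ i, c (Sum.inr (Sum.inl i))) + 2 * ∑ j, c (Sum.inr (Sum.inr j)) := by
      rw [Finset.sum_congr rfl (fun i (_ : i ∈ Finset.univ) => hci i), Finset.sum_add_distrib]
      rw [double_sum_swap v _ hdeg]
    constructor
    · intro i
      have h1 : (0:ℝ) ≤ ((x (Fin.castSucc i) : ℤ) : ℝ) := by
        rw [hci i]
        have h2 : (0:ℝ) ≤ ∑ j, c (Sum.inr (Sum.inr j)) * (v j i : ℝ) :=
          Finset.sum_nonneg (fun j _ => mul_nonneg (hc0 _) (by positivity))
        have h3 := hc0 (Sum.inr (Sum.inl i))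
        linarith
      exact_mod_cast h1
    · refine ⟨fun j => c (Sum.inr (Sum.inr j)), fun j => hc0 _, fun i => ?_, ?_⟩
      · rw [hci i]
        have := hc0 (Sum.inr (Sum.inl i))
        linarith
      · rw [hsum2, hcl]
        have h1 := hc0 (Sum.inl ())
        have h2 : (0:ℝ) ≤ ∑ i, c (Sum.inr (Sum.inl i)) :=
          Finset.sum_nonneg (fun i _ => hc0 _)
        linarith
  · rintro ⟨hpos, d, hd0, hA, hb⟩
    refine ⟨Sum.elim
        (fun _ => ((x (Fin.last s) : ℤ) : ℝ) - ((∑ i, ((x (Fin.castSucc i) : ℤ) : ℝ)) - ∑ j, d j))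
        (Sum.elim (fun i => ((x (Fin.castSucc i) : ℤ) : ℝ) - ∑ j, d j * (v j i : ℝ)) d),
      ?_, ?_⟩
    · rintro (u | i | j)
      · simp only [Sum.elim_inl]
        linarith [hb]
      · simp only [Sum.elim_inr, Sum.elim_inl]
        linarith [hA i]
      · exact hd0 j
    · intro k
      induction k using Fin.lastCases with
      | last =>
          rw [sum_sum_unit]
          simp only [Sum.elim_inl, Sum.elim_inr, bg1l, bg2l, bg3l, Int.cast_one, mul_one]
          rw [Finset.sum_sub_distrib]
          rw [double_sum_swap v d hdeg]
          ring
      | cast i =>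
          rw [sum_sum_unit]
          simp only [Sum.elim_inl, Sum.elim_inr, bg1c, bg2c, bg3c, Int.cast_zero, mul_zero,
            zero_add, Int.cast_ite, Int.cast_one, Int.cast_zero, mul_ite, mul_one]
          rw [Finset.sum_ite_eq' Finset.univ i
            (fun i' => ((x (Fin.castSucc i') : ℤ) : ℝ) - ∑ j, d j * (v j i' : ℝ))]
          simp only [Finset.mem_univ, if_true]
          push_cast
          ring

end Cone

section Cone2
variable {s q : ℕ} (v : Fin q → Fin s → ℕ)

lemma double_sum_swap_int (d : Fin q → ℤ) (hdeg : ∀ i, (∑ k, v i k) = 2) :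
    (∑ i, ∑ j, d j * (v j i : ℤ)) = 2 * ∑ j, d j := by
  rw [Finset.sum_comm]
  have : ∀ j : Fin q, (∑ i, d j * (v j i : ℤ)) = 2 * d j := by
    intro j
    rw [← Finset.mul_sum]
    have h2 : (∑ i, (v j i : ℤ)) = 2 := by exact_mod_cast hdeg j
    rw [h2]; ring
  rw [Finset.sum_congr rfl (fun j _ => this j), ← Finset.mul_sum]

/-- Characterization of membership in the semigroup. -/
lemma natRep_iff (hdeg : ∀ i, (∑ k, v i k) = 2) (x : Fin (s + 1) → ℤ) :
    (∃ c : (Unit ⊕ Fin s ⊕ Fin q) → ℕ, ∀ k, x k = ∑ j, (c j : ℤ) * bGens v j k) ↔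
    ((∀ i : Fin s, 0 ≤ x (Fin.castSucc i)) ∧ ∃ m : Fin q → ℕ, (∀ i : Fin s,
        (∑ j, (m j : ℤ) * (v j i : ℤ)) ≤ x (Fin.castSucc i)) ∧
      ((∑ i, x (Fin.castSucc i)) - (∑ j, (m j : ℤ)) ≤ x (Fin.last s))) := by
  constructor
  · rintro ⟨c, hc⟩
    have hci : ∀ i : Fin s, x (Fin.castSucc i)
        = (c (Sum.inr (Sum.inl i)) : ℤ) + ∑ j, (c (Sum.inr (Sum.inr j)) : ℤ) * (v j i : ℤ) := by
      intro i
      rw [hc (Fin.castSucc i), sum_sum_unit]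
      simp [bg1c, bg2c, bg3c, mul_ite, Finset.sum_ite_eq']
    have hcl : x (Fin.last s) = (c (Sum.inl ()) : ℤ)
        + ((∑ i, (c (Sum.inr (Sum.inl i)) : ℤ)) + ∑ j, (c (Sum.inr (Sum.inr j)) : ℤ)) := by
      rw [hc (Fin.last s), sum_sum_unit]
      simp [bg1l, bg2l, bg3l]
    have hsum2 : (∑ i, x (Fin.castSucc i))
        = (∑ i, (c (Sum.inr (Sum.inl i)) : ℤ)) + 2 * ∑ j, (c (Sum.inr (Sum.inr j)) : ℤ) := by
      rw [Finset.sum_congr rfl (fun i (_ : i ∈ Finset.univ) => hci i), Finset.sum_add_distrib]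
      rw [double_sum_swap_int v _ hdeg]
    constructor
    · intro i
      rw [hci i]
      have h2 : (0:ℤ) ≤ ∑ j, (c (Sum.inr (Sum.inr j)) : ℤ) * (v j i : ℤ) :=
        Finset.sum_nonneg (fun j _ => mul_nonneg (by positivity) (by positivity))
      positivity
    · refine ⟨fun j => c (Sum.inr (Sum.inr j)), fun i => ?_, ?_⟩
      · rw [hci i]
        have : (0:ℤ) ≤ (c (Sum.inr (Sum.inl i)) : ℤ) := by positivity
        linarith
      · rw [hsum2, hcl]
        have h1 : (0:ℤ) ≤ (c (Sum.inl ()) : ℤ) := by positivity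
        have h2 : (0:ℤ) ≤ ∑ i, (c (Sum.inr (Sum.inl i)) : ℤ) :=
          Finset.sum_nonneg (fun i _ => by positivity)
        linarith
  · rintro ⟨hpos, m, hA, hb⟩
    refine ⟨Sum.elim
        (fun _ => (x (Fin.last s) - ((∑ i, x (Fin.castSucc i)) - ∑ j, (m j : ℤ))).toNat)
        (Sum.elim (fun i => (x (Fin.castSucc i) - ∑ j, (m j : ℤ) * (v j i : ℤ)).toNat) m),
      ?_⟩
    intro k
    have hU : ((x (Fin.last s) - ((∑ i, x (Fin.castSucc i)) - ∑ j, (m j : ℤ))).toNat : ℤ)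
        = x (Fin.last s) - ((∑ i, x (Fin.castSucc i)) - ∑ j, (m j : ℤ)) :=
      Int.toNat_of_nonneg (by linarith [hb])
    have hE : ∀ i : Fin s, ((x (Fin.castSucc i) - ∑ j, (m j : ℤ) * (v j i : ℤ)).toNat : ℤ)
        = x (Fin.castSucc i) - ∑ j, (m j : ℤ) * (v j i : ℤ) :=
      fun i => Int.toNat_of_nonneg (by linarith [hA i])
    induction k using Fin.lastCases with
    | last =>
        rw [sum_sum_unit]
        simp only [Sum.elim_inl, Sum.elim_inr, bg1l, bg2l, bg3l, mul_one]
        rw [hU, Finset.sum_congr rfl (fun i (_ : i ∈ Finset.univ) => hE i), Finset.sum_sub_distrib]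
        rw [double_sum_swap_int v _ hdeg]
        ring
    | cast i =>
        rw [sum_sum_unit]
        simp only [Sum.elim_inl, Sum.elim_inr, bg1c, bg2c, bg3c, mul_zero, zero_add, mul_ite,
          mul_one]
        rw [Finset.sum_ite_eq' Finset.univ i
          (fun i' => ((x (Fin.castSucc i') - ∑ j, (m j : ℤ) * (v j i' : ℤ)).toNat : ℤ))]
        simp only [Finset.mem_univ, if_true]
        rw [hE i]
        ring

end Cone2


section Reduce

lemma exists_le_sum {q : ℕ} (m : Fin q → ℕ) (c : ℕ) (h : c ≤ ∑ j, m j) :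
    ∃ m' : Fin q → ℕ, (∀ j, m' j ≤ m j) ∧ (∑ j, m' j) = c := by
  suffices H : ∀ t : ℕ, ∀ m : Fin q → ℕ, (∑ j, m j) = c + t →
      ∃ m' : Fin q → ℕ, (∀ j, m' j ≤ m j) ∧ (∑ j, m' j) = c by
    exact H ((∑ j, m j) - c) m (by omega)
  intro t
  induction t with
  | zero => intro m hm; exact ⟨m, fun j => le_refl _, by omega⟩
  | succ t ih =>
      intro m hm
      have hj : ∃ j, m j ≠ 0 := by
        by_contra h'
        push_neg at h'
        simp only [h', Finset.sum_const_zero] at hm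
        omega
      obtain ⟨j, hj⟩ := hj
      set m2 := Function.update m j (m j - 1) with hm2
      have hmm : ∀ j', m j' = m2 j' + (if j' = j then 1 else 0) := by
        intro j'
        by_cases h' : j' = j
        · subst h'; simp [hm2, Function.update_self]; omega
        · simp [hm2, Function.update_of_ne h', h']
      have hsum : (∑ j', m2 j') = c + t := by
        have h1 : (∑ j', m j') = (∑ j', m2 j') + (∑ j' : Fin q, if j' = j then 1 else 0) := by
          rw [← Finset.sum_add_distrib]
          exact Finset.sum_congr rfl fun j' _ => hmm j'
        simp only [Finset.sum_ite_eq', Finset.mem_univ, if_true] at h1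
        omega
      obtain ⟨m', h1, h2⟩ := ih m2 hsum
      exact ⟨m', fun j' => le_trans (h1 j') (by rw [hmm j']; omega), h2⟩

end Reduce

section Bridge
variable {s q : ℕ} (v : Fin q → Fin s → ℕ)

/-- From a real solution of the fractional-matching system, a `p`-integral one. -/
lemma rat_matching (a : Fin s → ℤ) (nz : ℤ)
    (d : Fin q → ℝ) (hd0 : ∀ j, 0 ≤ d j)
    (hA : ∀ i : Fin s, (∑ j, d j * (v j i : ℝ)) ≤ (a i : ℝ))
    (hb : (nz : ℝ) ≤ ∑ j, d j) :
    ∃ (p : ℕ) (m : Fin q → ℕ), 1 ≤ p ∧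
      (∀ i, (∑ j, (m j : ℤ) * (v j i : ℤ)) ≤ p * a i) ∧ ((p : ℤ) * nz ≤ ∑ j, (m j : ℤ)) := by
  classical
  set Slist : List ((Fin q → ℚ) × ℚ) :=
    ((List.finRange q).map fun j0 =>
      ((fun j => if j = j0 then (-1:ℚ) else 0), (0:ℚ)))
    ++ ((List.finRange s).map fun i =>
      ((fun j => ((v j i : ℕ) : ℚ)), ((a i : ℤ) : ℚ)))
    ++ [((fun _ => (-1:ℚ)), -(nz : ℚ))] with hSlist
  have hfeasR : Feas ℝ Slist := by
    refine ⟨d, fun r hr => ?_⟩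
    rw [hSlist] at hr
    rcases List.mem_append.mp hr with hr | hr
    · rcases List.mem_append.mp hr with hr | hr
      · obtain ⟨j0, _, rfl⟩ := List.mem_map.mp hr
        have : FEval (fun j => if j = j0 then (-1:ℚ) else 0) d = -d j0 := by
          rw [FEval]
          rw [Finset.sum_congr rfl (fun j (_ : j ∈ Finset.univ) => ?_)]
          · rw [Finset.sum_ite_eq' Finset.univ j0 (fun j => -d j)]
            simp
          · by_cases h' : j = j0 <;> simp [h']
        rw [this]
        simp only [Rat.cast_zero]
        linarith [hd0 j0]
      · obtain ⟨i, _, rfl⟩ := List.mem_map.mp hr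
        have : FEval (fun j => ((v j i : ℕ) : ℚ)) d = ∑ j, d j * (v j i : ℝ) := by
          rw [FEval]
          exact Finset.sum_congr rfl fun j _ => by push_cast; ring
        rw [this]
        have := hA i
        push_cast
        linarith
    · rw [List.mem_singleton] at hr
      subst hr
      have : FEval (fun _ : Fin q => (-1:ℚ)) d = -∑ j, d j := by
        rw [FEval]
        simp [Finset.sum_neg_distrib]
      rw [this]
      push_cast
      linarith
  obtain ⟨d', hd'⟩ := feas_rat_of_feas_real Slist hfeasR
  have hd'0 : ∀ j0, 0 ≤ d' j0 := by
    intro j0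
    have hmem : ((fun j => if j = j0 then (-1:ℚ) else 0), (0:ℚ)) ∈ Slist := by
      rw [hSlist]
      exact List.mem_append.mpr (Or.inl (List.mem_append.mpr (Or.inl
        (List.mem_map.mpr ⟨j0, List.mem_finRange j0, rfl⟩))))
    have := hd' _ hmem
    have heval : FEval (fun j => if j = j0 then (-1:ℚ) else 0) d' = -d' j0 := by
      rw [FEval]
      rw [Finset.sum_congr rfl (fun j (_ : j ∈ Finset.univ) => ?_)]
      · rw [Finset.sum_ite_eq' Finset.univ j0 (fun j => -d' j)]
        simp
      · by_cases h' : j = j0 <;> simp [h']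
    rw [heval] at this
    simp only [Rat.cast_zero] at this
    linarith
  have hA' : ∀ i : Fin s, (∑ j, d' j * (v j i : ℚ)) ≤ ((a i : ℤ) : ℚ) := by
    intro i
    have hmem : ((fun j => ((v j i : ℕ) : ℚ)), ((a i : ℤ) : ℚ)) ∈ Slist := by
      rw [hSlist]
      exact List.mem_append.mpr (Or.inl (List.mem_append.mpr (Or.inr
        (List.mem_map.mpr ⟨i, List.mem_finRange i, rfl⟩))))
    have := hd' _ hmem
    have heval : FEval (fun j => ((v j i : ℕ) : ℚ)) d' = ∑ j, d' j * (v j i : ℚ) := by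
      rw [FEval]
      exact Finset.sum_congr rfl fun j _ => by push_cast; ring
    rw [heval] at this
    exact_mod_cast this
  have hb' : (nz : ℚ) ≤ ∑ j, d' j := by
    have hmem : ((fun _ : Fin q => (-1:ℚ)), -(nz : ℚ)) ∈ Slist := by
      rw [hSlist]
      exact List.mem_append.mpr (Or.inr (List.mem_singleton.mpr rfl))
    have := hd' _ hmem
    have heval : FEval (fun _ : Fin q => (-1:ℚ)) d' = -∑ j, d' j := by
      rw [FEval]
      simp [Finset.sum_neg_distrib]
    rw [heval] at this
    simp only [Rat.cast_id] at this
    linarith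
  -- clear denominators
  set p : ℕ := ∏ j, (d' j).den with hp
  have hp1 : 1 ≤ p := Nat.one_le_iff_ne_zero.mpr (by
    rw [hp]
    exact Finset.prod_ne_zero_iff.mpr fun j _ => (d' j).den_nz)
  have hint : ∀ j, ∃ z : ℕ, (z : ℚ) = d' j * p := by
    intro j
    obtain ⟨t, ht⟩ := Finset.dvd_prod_of_mem (fun j => (d' j).den) (Finset.mem_univ j)
    refine ⟨(d' j).num.toNat * t, ?_⟩
    have hnum : ((d' j).num.toNat : ℤ) = (d' j).num :=
      Int.toNat_of_nonneg (Rat.num_nonneg.mpr (hd'0 j))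
    have hden0 : ((d' j).den : ℚ) ≠ 0 := by
      exact_mod_cast (d' j).den_nz
    have hmul : d' j * ((d' j).den : ℚ) = ((d' j).num : ℚ) :=
      (eq_div_iff hden0).mp (Rat.num_div_den (d' j)).symm
    rw [hp, ht]
    push_cast
    have hnumQ : (((d' j).num.toNat : ℕ) : ℚ) = ((d' j).num : ℚ) := by exact_mod_cast hnum
    rw [hnumQ, ← mul_assoc, hmul]
  choose m hm using hint
  refine ⟨p, m, hp1, fun i => ?_, ?_⟩
  · have : (∑ j, (m j : ℚ) * (v j i : ℚ)) ≤ (p : ℚ) * ((a i : ℤ) : ℚ) := by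
      rw [Finset.sum_congr rfl (fun j (_ : j ∈ Finset.univ) => by rw [hm j])]
      have : (∑ j, d' j * (p:ℚ) * (v j i : ℚ)) = (p:ℚ) * ∑ j, d' j * (v j i : ℚ) := by
        rw [Finset.mul_sum]
        exact Finset.sum_congr rfl fun j _ => by ring
      rw [this]
      have hple : (0:ℚ) ≤ (p:ℚ) := by positivity
      exact mul_le_mul_of_nonneg_left (hA' i) hple
    exact_mod_cast this
  · have : (p : ℚ) * (nz : ℚ) ≤ ∑ j, (m j : ℚ) := by
      rw [Finset.sum_congr rfl (fun j (_ : j ∈ Finset.univ) => by rw [hm j])]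
      have : (∑ j, d' j * (p:ℚ)) = (p:ℚ) * ∑ j, d' j := by
        rw [Finset.mul_sum]
        exact Finset.sum_congr rfl fun j _ => by ring
      rw [this]
      have hple : (0:ℚ) ≤ (p:ℚ) := by positivity
      exact mul_le_mul_of_nonneg_left hb' hple
    exact_mod_cast this

end Bridge


theorem normal_iff_B_hilbert_basis_of_degree_two
    (K : Type*) [Field K] {s q : ℕ} (v : Fin q → Fin s → ℕ)
    (hdeg : ∀ i, (∑ k, v i k) = 2) :
    IsNormalIdeal (monIdeal K v) ↔
      ∀ x : Fin (s + 1) → ℤ,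
        (∃ c : (Unit ⊕ Fin s ⊕ Fin q) → ℝ, (∀ j, 0 ≤ c j) ∧
            ∀ k, (x k : ℝ) = ∑ j, c j * (bGens v j k : ℝ)) ↔
        (∃ c : (Unit ⊕ Fin s ⊕ Fin q) → ℕ, ∀ k, x k = ∑ j, (c j : ℤ) * bGens v j k) := by
  rw [normal_iff_A]
  constructor
  · intro hA x
    rw [realRep_iff v hdeg x, natRep_iff v hdeg x]
    constructor
    · rintro ⟨hpos, d, hd0, hAd, hbd⟩
      refine ⟨hpos, ?_⟩
      by_cases hn : (∑ i, x (Fin.castSucc i)) - x (Fin.last s) ≤ 0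
      · refine ⟨0, fun i => ?_, ?_⟩
        · simpa using hpos i
        · simp only [Pi.zero_apply, Nat.cast_zero, Finset.sum_const_zero, sub_zero]
          omega
      · push_neg at hn
        set nz : ℤ := (∑ i, x (Fin.castSucc i)) - x (Fin.last s) with hnz
        obtain ⟨p, m0, hp1, hA2, hb2⟩ := rat_matching v (fun i => x (Fin.castSucc i)) nz d hd0
          hAd (by rw [hnz]; push_cast; linarith)
        set aN : Fin s → ℕ := fun i => (x (Fin.castSucc i)).toNat with haNdef
        set nN : ℕ := nz.toNat with hnNdef
        have haN : ∀ i, ((aN i : ℕ) : ℤ) = x (Fin.castSucc i) :=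
          fun i => Int.toNat_of_nonneg (hpos i)
        have hnN : ((nN : ℕ) : ℤ) = nz := Int.toNat_of_nonneg (le_of_lt hn)
        have hA2N : ∀ i, (∑ j, m0 j * v j i) ≤ p * aN i := by
          intro i
          have h := hA2 i
          rw [← haN i] at h
          exact_mod_cast h
        have hb2N : p * nN ≤ ∑ j, m0 j := by
          have h := hb2
          rw [← hnN] at h
          exact_mod_cast h
        have hn1 : 1 ≤ nN := by omega
        obtain ⟨m1, hm1le, hm1sum⟩ := exists_le_sum m0 (p * nN) hb2N
        have hPv : Pv v (fun k => p * aN k) (p * nN) := by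
          refine ⟨m1, hm1sum, fun k => ?_⟩
          calc (∑ j, m1 j * v j k) ≤ ∑ j, m0 j * v j k :=
                Finset.sum_le_sum fun j _ => Nat.mul_le_mul_right _ (hm1le j)
          _ ≤ p * aN k := hA2N k
        obtain ⟨m', hm'sum, hm'le⟩ := hA aN nN p hn1 hp1 hPv
        refine ⟨m', fun i => ?_, ?_⟩
        · rw [← haN i]
          exact_mod_cast hm'le i
        · have : ((∑ j, m' j : ℕ) : ℤ) = (nN : ℤ) := by exact_mod_cast hm'sum
          push_cast at this ⊢
          rw [this, hnN, hnz]
          ring_nf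
          exact le_refl _
    · rintro ⟨hpos, m, hAm, hbm⟩
      refine ⟨hpos, fun j => (m j : ℝ), fun j => by positivity, fun i => ?_, ?_⟩
      · have h := hAm i
        have h2 : ((∑ j, (m j:ℤ) * (v j i : ℤ) : ℤ) : ℝ) ≤ ((x (Fin.castSucc i) : ℤ) : ℝ) := by
          exact_mod_cast h
        push_cast at h2
        push_cast
        exact h2
      · have h2 : (((∑ i, x (Fin.castSucc i)) - (∑ j, (m j : ℤ)) : ℤ) : ℝ)
            ≤ ((x (Fin.last s) : ℤ) : ℝ) := by exact_mod_cast hbm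
        push_cast at h2
        push_cast
        exact h2
  · intro hB a n p hn hp hP
    obtain ⟨m, hmsum, hmle⟩ := hP
    set x : Fin (s+1) → ℤ :=
      Fin.snoc (fun i => (a i : ℤ)) ((∑ i, (a i : ℤ)) - n) with hx
    have hx1 : ∀ i : Fin s, x (Fin.castSucc i) = (a i : ℤ) := by
      intro i; rw [hx]; simp [Fin.snoc_castSucc]
    have hx2 : x (Fin.last s) = (∑ i, (a i : ℤ)) - n := by
      rw [hx]; simp [Fin.snoc_last]
    have hp0 : (0:ℝ) < (p : ℝ) := by exact_mod_cast Nat.lt_of_lt_of_le Nat.zero_lt_one hp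
    have hreal : (∀ i : Fin s, 0 ≤ x (Fin.castSucc i)) ∧ ∃ d : Fin q → ℝ, (∀ j, 0 ≤ d j) ∧
        (∀ i : Fin s, (∑ j, d j * (v j i : ℝ)) ≤ ((x (Fin.castSucc i) : ℤ) : ℝ)) ∧
        ((∑ i, ((x (Fin.castSucc i) : ℤ) : ℝ)) - (∑ j, d j) ≤ ((x (Fin.last s) : ℤ) : ℝ)) := by
      refine ⟨fun i => by rw [hx1 i]; positivity,
        fun j => (m j : ℝ) / p, fun j => by positivity, fun i => ?_, ?_⟩
      · rw [hx1 i]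
        have hkey : (∑ j, ((m j : ℝ) / p) * (v j i : ℝ)) = (∑ j, (m j : ℝ) * (v j i : ℝ)) / p := by
          rw [Finset.sum_div]
          exact Finset.sum_congr rfl fun j _ => by ring
        rw [hkey, div_le_iff₀ hp0]
        have h := hmle i
        have h2 : ((∑ j, m j * v j i : ℕ) : ℝ) ≤ ((p * a i : ℕ) : ℝ) := by exact_mod_cast h
        push_cast at h2
        push_cast
        linarith
      · have hsm : (∑ j, (m j : ℝ) / p) = n := by
          rw [← Finset.sum_div]
          have h2 : (∑ j, (m j : ℝ)) = ((p * n : ℕ) : ℝ) := by exact_mod_cast hmsum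
          rw [h2]
          push_cast
          field_simp
        rw [hsm, hx2]
        have : (∑ i, ((x (Fin.castSucc i) : ℤ) : ℝ)) = ∑ i, ((a i : ℕ) : ℝ) := by
          exact Finset.sum_congr rfl fun i _ => by rw [hx1 i]; push_cast; ring
        rw [this]
        push_cast
        linarith [le_refl (0:ℝ)]
    obtain ⟨hpos', m'', hA'', hb''⟩ :=
      (natRep_iff v hdeg x).mp ((hB x).mp ((realRep_iff v hdeg x).mpr hreal))
    have hgeN : n ≤ ∑ j, m'' j := by
      have h1 : (∑ i, x (Fin.castSucc i)) = ∑ i, (a i : ℤ) :=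
        Finset.sum_congr rfl fun i _ => hx1 i
      rw [h1, hx2] at hb''
      have : (n : ℤ) ≤ ∑ j, (m'' j : ℤ) := by linarith
      exact_mod_cast this
    obtain ⟨m', hle, hsum⟩ := exists_le_sum m'' n hgeN
    refine ⟨m', hsum, fun k => ?_⟩
    have h2 : (∑ j, m'' j * v j k) ≤ a k := by
      have h := hA'' k
      rw [hx1 k] at h
      exact_mod_cast h
    calc (∑ j, m' j * v j k) ≤ ∑ j, m'' j * v j k :=
          Finset.sum_le_sum fun j _ => Nat.mul_le_mul_right _ (hle j)
    _ ≤ a k := h2
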